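/- arXiv:2303.05056 — 3 statements merged into one kernel-verified Lean document; each statement's English description precedes it below -/
import Mathlib

section
/- Let n be a positive integer with n ≡ 0 (mod 4), and let r₁, r₂ ∈ {1, −1}ⁿ ⊂ ℤⁿ be vectors whose standard inner product over ℤ is zero. Then the number of coordinates equal to 1 in r₁ is congruent modulo 2 to the number of coordinates equal to 1 in r₂. -/
lemma sum_pm_eq {n : ℕ} (r : Fin n → ℤ) (h : ∀ i, r i = 1 ∨ r i = -1) :
    ∑ i, r i = 2 * ((Finset.univ.filter fun i => r i = 1).card : ℤ) - n := by
  rw [← Finset.sum_filter_add_sum_filter_not Finset.univ (fun i => r i = 1)]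
  have h1 : ∑ i ∈ Finset.univ.filter (fun i => r i = 1), r i
      = ((Finset.univ.filter fun i => r i = 1).card : ℤ) := by
    rw [Finset.sum_congr rfl (fun i hi => (Finset.mem_filter.mp hi).2)]
    simp
  have h2 : ∑ i ∈ Finset.univ.filter (fun i => ¬ r i = 1), r i
      = -((Finset.univ.filter fun i => ¬ r i = 1).card : ℤ) := by
    have : ∀ i ∈ Finset.univ.filter (fun i => ¬ r i = 1), r i = -1 := by
      intro i hi
      rcases h i with h' | h'
      · exact absurd h' (Finset.mem_filter.mp hi).2
      · exact h'
    rw [Finset.sum_congr rfl this]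
    simp
  have h3 : (Finset.univ.filter fun i => ¬ r i = 1).card
      = n - (Finset.univ.filter fun i => r i = 1).card := by
    rw [Finset.filter_not, Finset.card_sdiff_of_subset (Finset.filter_subset _ _)]
    simp
  have h4 : (Finset.univ.filter fun i => r i = 1).card ≤ n := by
    simpa using Finset.card_filter_le Finset.univ (fun i => r i = 1)
  rw [h1, h2, h3]
  push_cast [Nat.cast_sub h4]
  ring

theorem hadamard_orthogonal_parity (n : ℕ) (hn : 0 < n) (h4 : n % 4 = 0)
    (r₁ r₂ : Fin n → ℤ)
    (h₁ : ∀ i, r₁ i = 1 ∨ r₁ i = -1)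
    (h₂ : ∀ i, r₂ i = 1 ∨ r₂ i = -1)
    (horth : ∑ i, r₁ i * r₂ i = 0) :
    (Finset.univ.filter fun i => r₁ i = 1).card % 2
      = (Finset.univ.filter fun i => r₂ i = 1).card % 2 := by
  set a := (Finset.univ.filter fun i => r₁ i = 1).card with ha
  set b := (Finset.univ.filter fun i => r₂ i = 1).card with hb
  have hsum : ∑ i, (r₁ i + 1) * (r₂ i + 1) = 2 * (a : ℤ) + 2 * b - n := by
    have : ∀ i : Fin n, (r₁ i + 1) * (r₂ i + 1)
        = r₁ i * r₂ i + r₁ i + r₂ i + 1 := fun i => by ring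
    rw [Finset.sum_congr rfl (fun i _ => this i)]
    simp only [Finset.sum_add_distrib, horth, Finset.sum_const,
      Finset.card_univ, Fintype.card_fin, sum_pm_eq r₁ h₁, sum_pm_eq r₂ h₂]
    push_cast
    ring
  have hdvd : (4 : ℤ) ∣ ∑ i, (r₁ i + 1) * (r₂ i + 1) := by
    apply Finset.dvd_sum
    intro i _
    rcases h₁ i with h | h <;> rcases h₂ i with h' | h' <;> rw [h, h'] <;> norm_num
  rw [hsum] at hdvd
  have hn4 : (4 : ℤ) ∣ (n : ℤ) := by
    have : 4 ∣ n := Nat.dvd_of_mod_eq_zero h4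
    exact_mod_cast Int.natCast_dvd_natCast.mpr this
  omega
end

section
/- If H is a Hadamard matrix of order n with n ≥ 3, then n is divisible by 4. -/
/-- A Hadamard matrix of order `n`: entries `±1` and `H * Hᵀ = n • I`. -/
def IsHadamard {n : ℕ} (H : Matrix (Fin n) (Fin n) ℤ) : Prop :=
  (∀ i j, H i j = 1 ∨ H i j = -1) ∧
    H * H.transpose = (n : ℤ) • (1 : Matrix (Fin n) (Fin n) ℤ)

theorem hadamard_order_div_four (n : ℕ) (H : Matrix (Fin n) (Fin n) ℤ)
    (hH : IsHadamard H) (hn : 3 ≤ n) : 4 ∣ n := by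
  obtain ⟨hpm, horth⟩ := hH
  have h0 : (0 : ℕ) < n := by omega
  have h1 : (1 : ℕ) < n := by omega
  have h2 : (2 : ℕ) < n := by omega
  set i0 : Fin n := ⟨0, h0⟩
  set i1 : Fin n := ⟨1, h1⟩
  set i2 : Fin n := ⟨2, h2⟩
  have key : ∀ i k : Fin n, i ≠ k → ∑ j, H i j * H k j = 0 := by
    intro i k hik
    have := congrFun (congrFun horth i) k
    simpa [Matrix.mul_apply, Matrix.one_apply, hik] using this
  have hsq : ∀ i j, H i j * H i j = 1 := by
    intro i j
    rcases hpm i j with h | h <;> simp [h]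
  have hsum : ∑ j, (1 + H i0 j * H i1 j) * (1 + H i0 j * H i2 j) = (n : ℤ) := by
    have e : ∀ j, (1 + H i0 j * H i1 j) * (1 + H i0 j * H i2 j)
        = 1 + H i0 j * H i1 j + H i0 j * H i2 j + H i1 j * H i2 j := by
      intro j
      rcases hpm i0 j with h | h <;> rw [h] <;> ring
    rw [Finset.sum_congr rfl fun j _ => e j]
    have h01 : i0 ≠ i1 := by simp [i0, i1, Fin.ext_iff]
    have h02 : i0 ≠ i2 := by simp [i0, i2, Fin.ext_iff]
    have h12 : i1 ≠ i2 := by simp [i1, i2, Fin.ext_iff]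
    simp [Finset.sum_add_distrib, key _ _ h01, key _ _ h02, key _ _ h12]
  have hdvd : (4 : ℤ) ∣ ∑ j, (1 + H i0 j * H i1 j) * (1 + H i0 j * H i2 j) := by
    apply Finset.dvd_sum
    intro j _
    rcases hpm i0 j with h0' | h0' <;> rcases hpm i1 j with h1' | h1' <;>
      rcases hpm i2 j with h2' | h2' <;> simp [h0', h1', h2']
  rw [hsum] at hdvd
  exact_mod_cast hdvd
end

section
/- If C is a self-dual code over 𝔽₃ of length n (i.e., C = C⊥ with respect to the standard inner product on 𝔽₃ⁿ), then n is divisible by 4. -/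
/-- The dual code of a ternary code, with respect to the standard inner product. -/
def dualCode {ι : Type*} [Fintype ι] (C : Submodule (ZMod 3) (ι → ZMod 3)) :
    Submodule (ZMod 3) (ι → ZMod 3) where
  carrier := {x | ∀ y ∈ C, ∑ i, x i * y i = 0}
  add_mem' := by
    intro a b ha hb y hy
    simp only [Set.mem_setOf_eq] at *
    simp [Pi.add_apply, add_mul, Finset.sum_add_distrib, ha y hy, hb y hy]
  zero_mem' := by intro y hy; simp
  smul_mem' := by
    intro c x hx y hy
    simp only [Set.mem_setOf_eq] at *
    simp [Pi.smul_apply, smul_eq_mul, mul_assoc, ← Finset.mul_sum, hx y hy]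

noncomputable def B3 (n : ℕ) : LinearMap.BilinForm (ZMod 3) (Fin n → ZMod 3) :=
  LinearMap.mk₂ (ZMod 3) (fun x y => ∑ i, x i * y i)
    (by intros; simp [add_mul, Finset.sum_add_distrib])
    (by intros; simp [smul_eq_mul, mul_assoc, Finset.mul_sum])
    (by intros; simp [mul_add, Finset.sum_add_distrib])
    (by intros; simp [smul_eq_mul, mul_left_comm, Finset.mul_sum])

lemma zmod3_aux : ∀ p m : ZMod 3, p ≠ 0 → p * p = -1 * (m * m) → False := by decide

open Matrix in
theorem selfDual_length_div_four (n : ℕ) (C : Submodule (ZMod 3) (Fin n → ZMod 3))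
    (hC : C = dualCode C) : 4 ∣ n := by
  haveI : Fact (Nat.Prime 3) := ⟨by norm_num⟩
  set B := B3 n with hB
  have happ : ∀ x y, B x y = ∑ i, x i * y i := fun x y => rfl
  have hsymm : ∀ x y, B x y = B y x := by
    intro x y; rw [happ, happ]; exact Finset.sum_congr rfl fun i _ => mul_comm _ _
  have hrefl : B.IsRefl := fun x y h => by rw [hsymm]; exact h
  have hnd : B.Nondegenerate := by
    apply (LinearMap.IsRefl.nondegenerate_iff_separatingLeft hrefl).mpr
    intro x hx
    funext i
    have := hx (Pi.single i 1)
    rw [happ] at this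
    simpa [Pi.single_apply] using this
  have hdual : dualCode C = LinearMap.BilinForm.orthogonal B C := by
    ext x
    rw [LinearMap.BilinForm.mem_orthogonal_iff]
    constructor
    · intro h y hy
      have := h y hy
      rw [hsymm, happ]
      exact this
    · intro h y hy
      have := h y hy
      rw [hsymm, happ] at this
      exact this
  rw [hdual] at hC
  set k := Module.finrank (ZMod 3) C with hk
  have horth := LinearMap.BilinForm.finrank_add_finrank_orthogonal (B := B) hrefl C
  rw [LinearMap.BilinForm.orthogonal_top_eq_bot hnd, inf_bot_eq, finrank_bot, add_zero,
    ← hC, ← hk] at horth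
  have hdim : Module.finrank (ZMod 3) (Fin n → ZMod 3) = n := by
    simp [Module.finrank_pi]
  rw [hdim] at horth
  -- horth : k + k = n
  obtain ⟨W, hW⟩ := Submodule.exists_isCompl C
  have hWk : Module.finrank (ZMod 3) W = k := by
    have := Submodule.finrank_add_eq_of_isCompl hW
    rw [hdim, ← hk] at this
    omega
  let bC : Module.Basis (Fin k) (ZMod 3) C := Module.finBasis (ZMod 3) C
  let bW : Module.Basis (Fin k) (ZMod 3) W := Module.finBasisOfFinrankEq (ZMod 3) W hWk
  let b : Module.Basis (Fin k ⊕ Fin k) (ZMod 3) (Fin n → ZMod 3) :=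
    (bC.prod bW).map (Submodule.prodEquivOfIsCompl C W hW)
  have hbinl : ∀ i, b (Sum.inl i) = (bC i : Fin n → ZMod 3) := by
    intro i
    simp [b, Module.Basis.prod_apply, Submodule.coe_prodEquivOfIsCompl']
  set M : Matrix (Fin k) (Fin k) (ZMod 3) := fun i j => B (b (Sum.inl i)) (b (Sum.inr j)) with hM
  set N : Matrix (Fin k) (Fin k) (ZMod 3) := fun i j => B (b (Sum.inr i)) (b (Sum.inr j)) with hN
  have hCort : ∀ x y, x ∈ C → y ∈ C → B x y = 0 := by
    intro x y hx hy
    rw [hC] at hy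
    exact hy x hx
  have hG : LinearMap.BilinForm.toMatrix b B = Matrix.fromBlocks 0 M Mᵀ N := by
    ext i j
    rcases i with i | i <;> rcases j with j | j <;>
      simp only [LinearMap.BilinForm.toMatrix_apply, Matrix.fromBlocks, Matrix.of_apply,
        Sum.elim_inl, Sum.elim_inr, Matrix.zero_apply, Matrix.transpose_apply, hM, hN]
    · rw [hbinl, hbinl]; exact hCort _ _ (bC i).2 (bC j).2
    · exact hsymm _ _
  have hfact : Matrix.fromBlocks (0 : Matrix (Fin k) (Fin k) (ZMod 3)) M Mᵀ N
      = (Matrix.fromBlocks 0 1 1 1 : Matrix (Fin k ⊕ Fin k) (Fin k ⊕ Fin k) (ZMod 3)) * Matrix.fromBlocks Mᵀ (N - M) 0 M := by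
    simp [Matrix.fromBlocks_multiply]
  have hdet1 : ((Matrix.fromBlocks 0 1 1 1 : Matrix (Fin k ⊕ Fin k) (Fin k ⊕ Fin k) (ZMod 3))).det
      = (-1 : ZMod 3) ^ k := by
    rw [Matrix.det_fromBlocks_one₂₂]
    simp [Matrix.det_neg]
  have hdetG : (LinearMap.BilinForm.toMatrix b B).det = (-1 : ZMod 3) ^ k * (Mᵀ.det * M.det) := by
    rw [hG, hfact, Matrix.det_mul, hdet1, Matrix.det_fromBlocks_zero₂₁]
  -- change of basis
  let e : Module.Basis (Fin k ⊕ Fin k) (ZMod 3) (Fin n → ZMod 3) :=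
    (Pi.basisFun (ZMod 3) (Fin n)).reindex ((finCongr horth.symm).trans finSumFinEquiv.symm)
  have he : LinearMap.BilinForm.toMatrix e B = 1 := by
    ext i j
    rw [LinearMap.BilinForm.toMatrix_apply, happ]
    simp only [e, Module.Basis.reindex_apply, Pi.basisFun_apply, Matrix.one_apply,
      Equiv.trans_apply, Equiv.symm_symm]
    rcases eq_or_ne i j with h | h
    · simp [h, Pi.single_apply]
    · have hne : ∀ x y : Fin k ⊕ Fin k, x ≠ y →
          ¬ Fin.cast horth (finSumFinEquiv x) = Fin.cast horth (finSumFinEquiv y) := by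
        intro x y hxy hc
        exact hxy (finSumFinEquiv.injective (Fin.cast_injective horth hc))
      simp [h, Pi.single_apply, hne i j h, hne j i (Ne.symm h)]
  have hchange := BilinForm.toMatrix_mul_basis_toMatrix e b B
  rw [he, Matrix.mul_one] at hchange
  set P := e.toMatrix b with hP
  have hPunit : IsUnit P.det := by
    have h1 : P * b.toMatrix e = 1 := Module.Basis.toMatrix_mul_toMatrix_flip e b
    exact IsUnit.of_mul_eq_one _ (by rw [← Matrix.det_mul, h1, Matrix.det_one])
  have hPne : P.det ≠ 0 := hPunit.ne_zero
  have hdet2 : P.det * P.det = (-1 : ZMod 3) ^ k * (Mᵀ.det * M.det) := by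
    rw [← hdetG, ← hchange, Matrix.det_mul, Matrix.det_transpose]
  rw [Matrix.det_transpose] at hdet2
  -- k must be even
  have hkeven : Even k := by
    by_contra hodd
    rw [Nat.not_even_iff_odd] at hodd
    rw [hodd.neg_one_pow] at hdet2
    exact zmod3_aux P.det M.det hPne hdet2
  obtain ⟨m, hm⟩ := hkeven
  exact ⟨m, by omega⟩
end
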